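/- Let R be a ring with identity and involution *, a ∈ R and j ∈ J(R). Suppose a is core invertible and a⁺ is a reflexive inverse of a. Then the following are equivalent: (1) a + j is core invertible; (2) a + j is regular; (3) (1 − a·a⁺)·j·(1 + a⁺·j)⁻¹·(1 − a⁺·a) = 0. In this case, setting j₃ := j + a·j·a⁺ + (a⁺)*·j*·a + j²·a⁺ + (a⁺)*·j*·j + (a⁺)*·j*·a·j·a⁺ + (a⁺)*·j*·j²·a⁺, the element 1 + j₃·a⊕ is a unit and the core inverse of a + j equals (1 + j·a⁺)·a⊕·(1 + j₃·a⊕)⁻¹·(1 + (a⁺)*·j*), where a⊕ denotes the core inverse of a. -/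

import Mathlib

/-- `x` is the core inverse of `a`: `x a² = a`, `a x² = x`, `(a x)* = a x`. -/
def IsCoreInverse {R : Type*} [Ring R] [StarRing R] (a x : R) : Prop :=
  x * (a * a) = a ∧ a * (x * x) = x ∧ star (a * x) = a * x

section JacAux

variable {R : Type*} [Ring R]

private lemma jac_left_inv {z : R} (hz : z ∈ Ideal.jacobson (⊥ : Ideal R)) :
    ∃ y : R, y * (1 + z) = 1 := by
  obtain ⟨y, hy⟩ := Ideal.mem_jacobson_iff.mp hz 1
  rw [Ideal.mem_bot] at hy
  refine ⟨y, ?_⟩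
  have h2 : y * 1 * z + y = 1 := by rwa [sub_eq_zero] at hy
  calc y * (1 + z) = y * 1 * z + y := by noncomm_ring
    _ = 1 := h2

lemma jac_one_add {z : R} (hz : z ∈ Ideal.jacobson (⊥ : Ideal R)) : IsUnit (1 + z) := by
  obtain ⟨y, hy⟩ := jac_left_inv hz
  have hyz : y = 1 + -(y * z) := by
    have h : y + y * z = 1 := by
      calc y + y * z = y * (1 + z) := by noncomm_ring
        _ = 1 := hy
    exact (eq_sub_of_add_eq h).trans (sub_eq_add_neg 1 (y * z))
  obtain ⟨u, hu⟩ := jac_left_inv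
    (show -(y * z) ∈ Ideal.jacobson (⊥ : Ideal R) from
      neg_mem (Ideal.mul_mem_left _ y hz))
  have huy : u * y = 1 := by rw [hyz]; exact hu
  have hueq : u = 1 + z := by
    calc u = u * (y * (1 + z)) := by rw [hy, mul_one]
      _ = (u * y) * (1 + z) := by rw [mul_assoc]
      _ = 1 + z := by rw [huy, one_mul]
  have h1z : (1 + z) * y = 1 := by rw [← hueq, huy]
  exact ⟨⟨1 + z, y, h1z, hy⟩, rfl⟩

lemma jac_mul_right {z : R} (r : R) (hz : z ∈ Ideal.jacobson (⊥ : Ideal R)) :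
    z * r ∈ Ideal.jacobson (⊥ : Ideal R) :=
  Ideal.mul_mem_right r _ hz

lemma jac_star [StarRing R] {z : R} (hz : z ∈ Ideal.jacobson (⊥ : Ideal R)) :
    star z ∈ Ideal.jacobson (⊥ : Ideal R) := by
  rw [Ideal.mem_jacobson_iff]
  intro y
  have h2 : IsUnit (1 + y * star z) := by
    have hs : star (1 + z * star y) = 1 + y * star z := by
      rw [star_add, star_one, star_mul, star_star]
    rw [← hs]
    exact isUnit_star.mpr (jac_one_add (jac_mul_right (star y) hz))
  obtain ⟨u, hu⟩ := h2
  refine ⟨((u⁻¹ : Units R) : R), ?_⟩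
  rw [Ideal.mem_bot]
  have hinv : ((u⁻¹ : Units R) : R) * (1 + y * star z) = 1 := by
    rw [← hu]; exact u.inv_mul
  calc ((u⁻¹ : Units R) : R) * y * star z + ((u⁻¹ : Units R) : R) - 1
      = ((u⁻¹ : Units R) : R) * (1 + y * star z) - 1 := by noncomm_ring
    _ = 0 := by rw [hinv, sub_self]

end JacAux

private lemma stmt8_regC {R : Type*} [Ring R] (a ap j x : R)
    (hj : j ∈ Ideal.jacobson (⊥ : Ideal R))
    (h1 : a * ap * a = a) (h2 : ap * a * ap = ap)
    (hx : (a + j) * x * (a + j) = a + j) :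
    (1 - a * ap) * j * Ring.inverse (1 + ap * j) * (1 - ap * a) = 0 := by
  have hvu : IsUnit (1 + ap * j) := jac_one_add (Ideal.mul_mem_left _ ap hj)
  set V := Ring.inverse (1 + ap * j) with hV
  have hvV : (1 + ap * j) * V = 1 := by rw [hV]; exact Ring.mul_inverse_cancel _ hvu
  have hVv : V * (1 + ap * j) = 1 := by rw [hV]; exact Ring.inverse_mul_cancel _ hvu
  clear_value V
  have hgoal : (1 - a * ap) * j * V * (1 - ap * a)
      = ((1 - a * ap) * (j * V)) * (1 - ap * a) := by noncomm_ring
  rw [hgoal]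
  set T := (1 - a * ap) * (j * V) with hT
  clear_value T
  -- basic facts
  have hpT : (a * ap) * T = 0 := by
    rw [hT]
    calc (a * ap) * ((1 - a * ap) * (j * V))
        = ((a * ap) - (a * ap * a) * ap) * (j * V) := by noncomm_ring
      _ = 0 := by rw [h1, sub_self, zero_mul]
  have hapT : ap * T = 0 := by
    rw [hT]
    calc ap * ((1 - a * ap) * (j * V))
        = (ap - (ap * a * ap)) * (j * V) := by noncomm_ring
      _ = 0 := by rw [h2, sub_self, zero_mul]
  set c := a + T with hc
  clear_value c
  have hcv : c * (1 + ap * j) = a + j := by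
    rw [hc, hT]
    calc (a + (1 - a * ap) * (j * V)) * (1 + ap * j)
        = a * (1 + ap * j) + (1 - a * ap) * (j * (V * (1 + ap * j))) := by noncomm_ring
      _ = a * (1 + ap * j) + (1 - a * ap) * (j * 1) := by rw [hVv]
      _ = a + j := by noncomm_ring
  have hc2 : c = (a + j) * V := by
    calc c = c * ((1 + ap * j) * V) := by rw [hvV, mul_one]
      _ = (c * (1 + ap * j)) * V := by rw [mul_assoc]
      _ = (a + j) * V := by rw [hcv]
  have hcyc : (c * ((1 + ap * j) * x)) * c = c := by
    calc (c * ((1 + ap * j) * x)) * c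
        = ((c * (1 + ap * j)) * x) * c := by noncomm_ring
      _ = ((a + j) * x) * c := by rw [hcv]
      _ = ((a + j) * x) * ((a + j) * V) := by rw [← hc2]
      _ = ((a + j) * x * (a + j)) * V := by noncomm_ring
      _ = (a + j) * V := by rw [hx]
      _ = c := by rw [← hc2]
  have hpc : (a * ap) * c = a := by
    rw [hc]
    calc (a * ap) * (a + T) = a * ap * a + (a * ap) * T := by noncomm_ring
      _ = a := by rw [h1, hpT, add_zero]
  have hapc : ap * c = ap * a := by
    rw [hc]
    calc ap * (a + T) = ap * a + ap * T := by noncomm_ring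
      _ = ap * a := by rw [hapT, add_zero]
  have homega : (1 - a * ap - T * ap) * c = T * (1 - ap * a) := by
    calc (1 - a * ap - T * ap) * c
        = c - (a * ap) * c - T * (ap * c) := by noncomm_ring
      _ = c - a - T * (ap * a) := by rw [hpc, hapc]
      _ = T * (1 - ap * a) := by rw [hc]; noncomm_ring
  have hc1q : c * (1 - ap * a) = T * (1 - ap * a) := by
    rw [hc]
    calc (a + T) * (1 - ap * a)
        = (a - a * ap * a) + T * (1 - ap * a) := by noncomm_ring
      _ = T * (1 - ap * a) := by rw [h1, sub_self, zero_add]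
  have hqq : (T * (1 - ap * a)) * (1 - ap * a) = T * (1 - ap * a) := by
    calc (T * (1 - ap * a)) * (1 - ap * a)
        = T * (1 - ap * a - ap * a + (ap * a * ap) * a) := by noncomm_ring
      _ = T * (1 - ap * a) := by rw [h2]; noncomm_ring
  have htt : T * (1 - ap * a)
      = (T * (1 - ap * a)) * (((1 + ap * j) * x) * (T * (1 - ap * a))) := by
    calc T * (1 - ap * a)
        = ((1 - a * ap - T * ap) * c) * (1 - ap * a) := by rw [homega, hqq]
      _ = ((1 - a * ap - T * ap) * ((c * ((1 + ap * j) * x)) * c)) * (1 - ap * a) := by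
          rw [hcyc]
      _ = ((1 - a * ap - T * ap) * c) * (((1 + ap * j) * x) * (c * (1 - ap * a))) := by
          noncomm_ring
      _ = (T * (1 - ap * a)) * (((1 + ap * j) * x) * (T * (1 - ap * a))) := by
          rw [homega, hc1q]
  have hTJ : T * (1 - ap * a) ∈ Ideal.jacobson (⊥ : Ideal R) := by
    have hTm : T ∈ Ideal.jacobson (⊥ : Ideal R) := by
      rw [hT]
      have : (1 - a * ap) * (j * V) = ((1 - a * ap) * j) * V := by rw [mul_assoc]
      rw [this]
      exact jac_mul_right V (Ideal.mul_mem_left _ _ hj)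
    exact jac_mul_right _ hTm
  -- conclude t = 0
  have hyu : IsUnit (1 - ((1 + ap * j) * x) * (T * (1 - ap * a))) := by
    have hm : -(((1 + ap * j) * x) * (T * (1 - ap * a))) ∈ Ideal.jacobson (⊥ : Ideal R) :=
      neg_mem (Ideal.mul_mem_left _ _ hTJ)
    have := jac_one_add hm
    rwa [← sub_eq_add_neg] at this
  have hz : (T * (1 - ap * a)) * (1 - ((1 + ap * j) * x) * (T * (1 - ap * a))) = 0 := by
    calc (T * (1 - ap * a)) * (1 - ((1 + ap * j) * x) * (T * (1 - ap * a)))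
        = T * (1 - ap * a)
          - (T * (1 - ap * a)) * (((1 + ap * j) * x) * (T * (1 - ap * a))) := by noncomm_ring
      _ = 0 := by rw [← htt, sub_self]
  have hr : (1 - ((1 + ap * j) * x) * (T * (1 - ap * a)))
      * Ring.inverse (1 - ((1 + ap * j) * x) * (T * (1 - ap * a))) = 1 :=
    Ring.mul_inverse_cancel _ hyu
  calc T * (1 - ap * a)
      = (T * (1 - ap * a)) * ((1 - ((1 + ap * j) * x) * (T * (1 - ap * a)))
        * Ring.inverse (1 - ((1 + ap * j) * x) * (T * (1 - ap * a)))) := by rw [hr, mul_one]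
    _ = ((T * (1 - ap * a)) * (1 - ((1 + ap * j) * x) * (T * (1 - ap * a))))
        * Ring.inverse (1 - ((1 + ap * j) * x) * (T * (1 - ap * a))) := by
          rw [← mul_assoc, ← mul_assoc]
    _ = 0 := by rw [hz, zero_mul]

private lemma stmt8_coreC {R : Type*} [Ring R] [StarRing R] (a ac ap j j₃ : R)
    (hj : j ∈ Ideal.jacobson (⊥ : Ideal R))
    (h3 : ac * (a * a) = a) (h4 : a * (ac * ac) = ac) (h5 : star (a * ac) = a * ac)
    (h1 : a * ap * a = a) (h2 : ap * a * ap = ap)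
    (hcond : (1 - a * ap) * j * Ring.inverse (1 + ap * j) * (1 - ap * a) = 0)
    (hj3 : j₃ = j + a * j * ap + star ap * star j * a + j * j * ap
          + star ap * star j * j + star ap * star j * a * j * ap
          + star ap * star j * (j * j) * ap) :
    IsUnit (1 + j₃ * ac) ∧
    IsCoreInverse (a + j)
      ((1 + j * ap) * ac * Ring.inverse (1 + j₃ * ac) * (1 + star ap * star j)) := by
  -- units and inverses
  have hvu : IsUnit (1 + ap * j) := jac_one_add (Ideal.mul_mem_left _ ap hj)
  set V := Ring.inverse (1 + ap * j) with hV
  have hvV : (1 + ap * j) * V = 1 := by rw [hV]; exact Ring.mul_inverse_cancel _ hvu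
  clear_value V
  set w := 1 + j * ap with hw
  have hwu : IsUnit w := by rw [hw]; exact jac_one_add (jac_mul_right ap hj)
  set sw := 1 + star ap * star j with hsw
  have hstarw : star w = sw := by
    rw [hw, hsw, star_add, star_one, star_mul]
  have hswu : IsUnit sw := by rw [← hstarw]; exact isUnit_star.mpr hwu
  set W2 := Ring.inverse sw with hW2def
  have hswW2 : sw * W2 = 1 := by rw [hW2def]; exact Ring.mul_inverse_cancel _ hswu
  have hW2sw : W2 * sw = 1 := by rw [hW2def]; exact Ring.inverse_mul_cancel _ hswu
  clear_value W2
  -- j₃ in the radical, k a unit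
  have hj3J : j₃ ∈ Ideal.jacobson (⊥ : Ideal R) := by
    rw [hj3]
    exact add_mem (add_mem (add_mem (add_mem (add_mem (add_mem hj
      (jac_mul_right ap (Ideal.mul_mem_left _ a hj)))
      (jac_mul_right a (Ideal.mul_mem_left _ (star ap) (jac_star hj))))
      (jac_mul_right ap (Ideal.mul_mem_left _ j hj)))
      (Ideal.mul_mem_left _ (star ap * star j) hj))
      (jac_mul_right ap (Ideal.mul_mem_left _ (star ap * star j * a) hj)))
      (jac_mul_right ap (Ideal.mul_mem_left _ (star ap * star j) (Ideal.mul_mem_left _ j hj)))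
  set k := 1 + j₃ * ac with hk
  have hku : IsUnit k := by rw [hk]; exact jac_one_add (jac_mul_right ac hj3J)
  set K := Ring.inverse k with hK
  have hkK : k * K = 1 := by rw [hK]; exact Ring.mul_inverse_cancel _ hku
  have hKk : K * k = 1 := by rw [hK]; exact Ring.inverse_mul_cancel _ hku
  clear_value K
  refine ⟨hku, ?_⟩
  -- basic core-inverse identities
  have c1 : a * ac * a = a := by
    nth_rewrite 2 [← h3]
    calc a * ac * (ac * (a * a)) = (a * (ac * ac)) * (a * a) := by noncomm_ring
      _ = ac * (a * a) := by rw [h4]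
      _ = a := h3
  have c2 : ac * (a * ac) = ac := by
    nth_rewrite 2 [← h4]
    calc ac * (a * (a * (ac * ac))) = (ac * (a * a)) * (ac * ac) := by noncomm_ring
      _ = a * (ac * ac) := by rw [h3]
      _ = ac := h4
  have heE : (a * ac) * (a * ac) = a * ac := by
    calc (a * ac) * (a * ac) = (a * ac * a) * ac := by noncomm_ring
      _ = a * ac := by rw [c1]
  have heac : (a * ac) * ac = ac := by rw [mul_assoc]; exact h4
  have hge : (1 - a * ac) * (a * ac) = 0 := by
    calc (1 - a * ac) * (a * ac) = a * ac - (a * ac) * (a * ac) := by noncomm_ring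
      _ = 0 := by rw [heE, sub_self]
  have hacg : ac * (1 - a * ac) = 0 := by
    calc ac * (1 - a * ac) = ac - ac * (a * ac) := by noncomm_ring
      _ = 0 := by rw [c2, sub_self]
  have hstarg : star (1 - a * ac) = 1 - a * ac := by rw [star_sub, star_one, h5]
  -- condition
  have hcond' : (1 - a * ap) * ((j * V) * (1 - ap * a)) = 0 := by
    calc (1 - a * ap) * ((j * V) * (1 - ap * a))
        = (1 - a * ap) * j * V * (1 - ap * a) := by noncomm_ring
      _ = 0 := hcond
  have hX : (a * ap) * ((j * V) * (1 - ap * a)) = (j * V) * (1 - ap * a) := by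
    have h := hcond'
    rw [sub_mul, one_mul, sub_eq_zero] at h
    exact h.symm
  -- the element d
  set d := a + (j * V) * (1 - ap * a) with hd
  have hpd : (a * ap) * d = d := by
    rw [hd]
    calc (a * ap) * (a + (j * V) * (1 - ap * a))
        = a * ap * a + (a * ap) * ((j * V) * (1 - ap * a)) := by noncomm_ring
      _ = a + (j * V) * (1 - ap * a) := by rw [h1, hX]
  have hed : (a * ac) * d = d := by
    calc (a * ac) * d = (a * ac) * ((a * ap) * d) := by rw [hpd]
      _ = ((a * ac * a) * ap) * d := by noncomm_ring
      _ = (a * ap) * d := by rw [c1]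
      _ = d := hpd
  have hgd : (1 - a * ac) * d = 0 := by
    calc (1 - a * ac) * d = d - (a * ac) * d := by noncomm_ring
      _ = 0 := by rw [hed, sub_self]
  have hdg0 : star d * (1 - a * ac) = 0 := by
    rw [← hstarg, ← star_mul, hgd, star_zero]
  have hdtau : ac * ((a * a) * (ap * d)) = d := by
    calc ac * ((a * a) * (ap * d)) = (ac * (a * a)) * (ap * d) := by noncomm_ring
      _ = a * (ap * d) := by rw [h3]
      _ = (a * ap) * d := by rw [← mul_assoc]
      _ = d := hpd
  have hjVw : w * (j * V) = j := by
    rw [hw]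
    calc (1 + j * ap) * (j * V) = (j * (1 + ap * j)) * V := by noncomm_ring
      _ = j * ((1 + ap * j) * V) := by rw [mul_assoc]
      _ = j := by rw [hvV, mul_one]
  have hs_wd : w * d = a + j := by
    rw [hd]
    calc w * (a + (j * V) * (1 - ap * a))
        = w * a + (w * (j * V)) * (1 - ap * a) := by noncomm_ring
      _ = w * a + j * (1 - ap * a) := by rw [hjVw]
      _ = a + j := by rw [hw]; noncomm_ring
  clear_value d
  -- k-decomposition
  have hA : sw * ((a + j) * w) = a + j₃ := by
    rw [hw, hsw, hj3]; noncomm_ring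
  have hA' : sw * ((w * d) * w) = a + j₃ := by rw [hs_wd]; exact hA
  have hk3' : k - (1 - a * ac) = (sw * w) * (d * (w * ac)) := by
    calc k - (1 - a * ac) = (1 + j₃ * ac) - (1 - a * ac) := by rw [hk]
      _ = (a + j₃) * ac := by noncomm_ring
      _ = (sw * ((w * d) * w)) * ac := by rw [hA']
      _ = (sw * w) * (d * (w * ac)) := by noncomm_ring
  clear_value k
  have hkg : k * (1 - a * ac) = 1 - a * ac := by
    have : k * (1 - a * ac) = (1 - a * ac) + j₃ * (ac * (1 - a * ac)) := by
      rw [hk]; noncomm_ring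
    rw [this, hacg, mul_zero, add_zero]
  have hKg : K * (1 - a * ac) = 1 - a * ac := by
    calc K * (1 - a * ac) = K * (k * (1 - a * ac)) := by rw [hkg]
      _ = (K * k) * (1 - a * ac) := by rw [mul_assoc]
      _ = 1 - a * ac := by rw [hKk, one_mul]
  have hstar2 : K * ((sw * w) * (d * (w * ac))) = a * ac := by
    calc K * ((sw * w) * (d * (w * ac))) = K * (k - (1 - a * ac)) := by rw [hk3']
      _ = K * k - K * (1 - a * ac) := by noncomm_ring
      _ = 1 - (1 - a * ac) := by rw [hKk, hKg]
      _ = a * ac := by noncomm_ring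
  -- the unit u and E2 core identity
  set u := (1 - a * ac) + d * (w * ac) with hu_def
  have hueq : u = 1 + (a * (j * ap) + ((j * V) * (1 - ap * a)) * w) * ac := by
    rw [hu_def, hd, hw]; noncomm_ring
  have huu : IsUnit u := by
    rw [hueq]
    exact jac_one_add (jac_mul_right ac (add_mem
      (Ideal.mul_mem_left _ a (jac_mul_right ap hj))
      (jac_mul_right w (jac_mul_right (1 - ap * a) (jac_mul_right V hj)))))
  set U := Ring.inverse u with hU
  have huU : u * U = 1 := by rw [hU]; exact Ring.mul_inverse_cancel _ huu
  clear_value U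
  clear_value u
  have heu : (a * ac) * u = d * (w * ac) := by
    rw [hu_def]
    calc (a * ac) * ((1 - a * ac) + d * (w * ac))
        = (a * ac) - (a * ac) * (a * ac) + ((a * ac) * d) * (w * ac) := by noncomm_ring
      _ = (a * ac) - (a * ac) + d * (w * ac) := by rw [heE, hed]
      _ = d * (w * ac) := by noncomm_ring
  have hmU : (d * (w * ac)) * (U * (a * ac)) = a * ac := by
    rw [← heu]
    calc ((a * ac) * u) * (U * (a * ac)) = (a * ac) * ((u * U) * (a * ac)) := by noncomm_ring
      _ = (a * ac) * (a * ac) := by rw [huU, one_mul]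
      _ = a * ac := heE
  have hacm : (d * (w * ac)) * ((U * (a * ac)) * ac) = ac := by
    calc (d * (w * ac)) * ((U * (a * ac)) * ac)
        = ((d * (w * ac)) * (U * (a * ac))) * ac := by noncomm_ring
      _ = (a * ac) * ac := by rw [hmU]
      _ = ac := heac
  have hE2core : (1 - a * ac) * (K * ((sw * w) * ac)) = 0 := by
    calc (1 - a * ac) * (K * ((sw * w) * ac))
        = (1 - a * ac) * (K * ((sw * w) * ((d * (w * ac)) * ((U * (a * ac)) * ac)))) := by
          rw [hacm]
      _ = (1 - a * ac) * ((K * ((sw * w) * (d * (w * ac)))) * ((U * (a * ac)) * ac)) := by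
          noncomm_ring
      _ = (1 - a * ac) * ((a * ac) * ((U * (a * ac)) * ac)) := by rw [hstar2]
      _ = ((1 - a * ac) * (a * ac)) * ((U * (a * ac)) * ac) := by noncomm_ring
      _ = 0 := by rw [hge, zero_mul]
  -- the projection identity  s*x = 1 - W2*((1-a*ac)*(K*sw))
  have hsx : (w * d) * (w * ac * K * sw) = 1 - W2 * ((1 - a * ac) * (K * sw)) := by
    symm
    have hWk1 : W2 * (k * (K * sw)) = 1 := by
      calc W2 * (k * (K * sw)) = W2 * ((k * K) * sw) := by rw [mul_assoc]
        _ = W2 * sw := by rw [hkK, one_mul]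
        _ = 1 := hW2sw
    calc 1 - W2 * ((1 - a * ac) * (K * sw))
        = W2 * (k * (K * sw)) - W2 * ((1 - a * ac) * (K * sw)) := by rw [hWk1]
      _ = W2 * ((k - (1 - a * ac)) * (K * sw)) := by noncomm_ring
      _ = W2 * (((sw * w) * (d * (w * ac))) * (K * sw)) := by rw [hk3']
      _ = (W2 * sw) * ((w * (d * (w * ac))) * (K * sw)) := by noncomm_ring
      _ = (w * (d * (w * ac))) * (K * sw) := by rw [hW2sw, one_mul]
      _ = (w * d) * (w * ac * K * sw) := by noncomm_ring
  -- goal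
  rw [show (a + j) = w * d from hs_wd.symm]
  refine ⟨?_, ?_, ?_⟩
  · -- E1
    nth_rewrite 2 [← hdtau]
    calc w * ac * K * sw * (w * d * (w * (ac * ((a * a) * (ap * d)))))
        = w * (ac * ((K * ((sw * w) * (d * (w * ac)))) * ((a * a) * (ap * d)))) := by
          noncomm_ring
      _ = w * (ac * ((a * ac) * ((a * a) * (ap * d)))) := by rw [hstar2]
      _ = w * ((ac * (a * ac)) * ((a * a) * (ap * d))) := by noncomm_ring
      _ = w * (ac * ((a * a) * (ap * d))) := by rw [c2]
      _ = w * d := by rw [hdtau]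
  · -- E2
    calc (w * d) * ((w * ac * K * sw) * (w * ac * K * sw))
        = ((w * d) * (w * ac * K * sw)) * (w * ac * K * sw) := by noncomm_ring
      _ = (1 - W2 * ((1 - a * ac) * (K * sw))) * (w * ac * K * sw) := by rw [hsx]
      _ = (w * ac * K * sw)
          - W2 * (((1 - a * ac) * (K * ((sw * w) * ac))) * (K * sw)) := by noncomm_ring
      _ = w * ac * K * sw := by rw [hE2core, zero_mul, mul_zero, sub_zero]
  · -- E3
    have hsN : star (w * d) * (W2 * ((1 - a * ac) * (K * sw))) = 0 := by
      rw [star_mul, hstarw]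
      calc (star d * sw) * (W2 * ((1 - a * ac) * (K * sw)))
          = star d * ((sw * W2) * ((1 - a * ac) * (K * sw))) := by noncomm_ring
        _ = star d * ((1 - a * ac) * (K * sw)) := by rw [hswW2, one_mul]
        _ = (star d * (1 - a * ac)) * (K * sw) := by noncomm_ring
        _ = 0 := by rw [hdg0, zero_mul]
    have hself : star (w * d) * ((w * d) * (w * ac * K * sw)) = star (w * d) := by
      rw [hsx]
      calc star (w * d) * (1 - W2 * ((1 - a * ac) * (K * sw)))
          = star (w * d) - star (w * d) * (W2 * ((1 - a * ac) * (K * sw))) := by noncomm_ring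
        _ = star (w * d) := by rw [hsN, sub_zero]
    have h1' : star ((w * d) * (w * ac * K * sw))
        = star ((w * d) * (w * ac * K * sw)) * ((w * d) * (w * ac * K * sw)) := by
      conv_lhs => rw [star_mul]
      rw [← hself]
      calc star (w * ac * K * sw) * (star (w * d) * ((w * d) * (w * ac * K * sw)))
          = (star (w * ac * K * sw) * star (w * d)) * ((w * d) * (w * ac * K * sw)) := by
            rw [← mul_assoc]
        _ = star ((w * d) * (w * ac * K * sw)) * ((w * d) * (w * ac * K * sw)) := by
            rw [← star_mul]
    have h2' : (w * d) * (w * ac * K * sw)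
        = star ((w * d) * (w * ac * K * sw)) * ((w * d) * (w * ac * K * sw)) := by
      conv_lhs => rw [← star_star ((w * d) * (w * ac * K * sw)), h1', star_mul, star_star]
    rw [h1']
    exact h2'.symm

/-- if `a` is core invertible (with core inverse `ac`), `a⁺` is a
reflexive inverse of `a` and `j` is in the Jacobson radical, then (1) `a + j` is core
invertible ↔ (2) `a + j` is regular ↔ (3) `(1 - a a⁺) j (1 + a⁺ j)⁻¹ (1 - a⁺ a) = 0`;
in this case, with `j₃` as displayed, `1 + j₃ a⊕` is a unit and the core inverse of
`a + j` equals `(1 + j a⁺) a⊕ (1 + j₃ a⊕)⁻¹ (1 + (a⁺)* j*)`. -/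
theorem stmt8 {R : Type*} [Ring R] [StarRing R] (a ac ap j : R)
    (hj : j ∈ Ideal.jacobson (⊥ : Ideal R))
    (hac : IsCoreInverse a ac)
    (hap : a * ap * a = a ∧ ap * a * ap = ap) :
    ((∃ x, IsCoreInverse (a + j) x) ↔ (∃ x, (a + j) * x * (a + j) = a + j)) ∧
    ((∃ x, IsCoreInverse (a + j) x) ↔
      (1 - a * ap) * j * Ring.inverse (1 + ap * j) * (1 - ap * a) = 0) ∧
    ((1 - a * ap) * j * Ring.inverse (1 + ap * j) * (1 - ap * a) = 0 →
      ∀ j₃ : R, j₃ = j + a * j * ap + star ap * star j * a + j * j * ap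
          + star ap * star j * j + star ap * star j * a * j * ap
          + star ap * star j * (j * j) * ap →
        IsUnit (1 + j₃ * ac) ∧
        IsCoreInverse (a + j)
          ((1 + j * ap) * ac * Ring.inverse (1 + j₃ * ac)
            * (1 + star ap * star j))) := by
  obtain ⟨h3, h4, h5⟩ := hac
  obtain ⟨h1, h2⟩ := hap
  have hcore_reg : ∀ x : R, IsCoreInverse (a + j) x → (a + j) * x * (a + j) = a + j := by
    rintro x ⟨e1, e2, -⟩
    calc (a + j) * x * (a + j) = ((a + j) * x) * (x * ((a + j) * (a + j))) := by rw [e1]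
      _ = ((a + j) * (x * x)) * ((a + j) * (a + j)) := by noncomm_ring
      _ = x * ((a + j) * (a + j)) := by rw [e2]
      _ = a + j := e1
  have hB : (∃ x, (a + j) * x * (a + j) = a + j) →
      (1 - a * ap) * j * Ring.inverse (1 + ap * j) * (1 - ap * a) = 0 := by
    rintro ⟨x, hx⟩
    exact stmt8_regC a ap j x hj h1 h2 hx
  have hC : (1 - a * ap) * j * Ring.inverse (1 + ap * j) * (1 - ap * a) = 0 →
      IsUnit (1 + (j + a * j * ap + star ap * star j * a + j * j * ap
          + star ap * star j * j + star ap * star j * a * j * ap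
          + star ap * star j * (j * j) * ap) * ac) ∧
      IsCoreInverse (a + j)
        ((1 + j * ap) * ac * Ring.inverse (1 + (j + a * j * ap + star ap * star j * a
          + j * j * ap + star ap * star j * j + star ap * star j * a * j * ap
          + star ap * star j * (j * j) * ap) * ac) * (1 + star ap * star j)) :=
    fun hcond => stmt8_coreC a ac ap j _ hj h3 h4 h5 h1 h2 hcond rfl
  refine ⟨⟨fun ⟨x, hx⟩ => ⟨x, hcore_reg x hx⟩, fun hr => ⟨_, (hC (hB hr)).2⟩⟩,
    ⟨fun ⟨x, hx⟩ => hB ⟨x, hcore_reg x hx⟩, fun hcond => ⟨_, (hC hcond).2⟩⟩,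
    fun hcond j₃ hj3 => by subst hj3; exact hC hcond⟩
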